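/- arXiv:2603.00896 — 3 statements merged into one kernel-verified Lean document; each statement's English description precedes it below -/
import Mathlib

section
/- If a pre-Coxeter system S for a Coxeter matrix M on a group G satisfies the exchange property, then the underlying group homomorphism S.hom : M.Group →* G is injective (and hence an isomorphism, making G a Coxeter group with matrix M). -/
variable {B : Type*} (M : CoxeterMatrix B) (G : Type*) [Group G]

/-- A *pre-Coxeter system* for a Coxeter matrix `M` on a group `G`: a surjective group
homomorphism from the Coxeter group of `M` to `G` such that `M i j` is the order of
the product of the images of the `i`-th and `j`-th simple generators, and such that no
simple generator is sent to the identity. -/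
structure PreCoxeterSystem where
  hom : M.Group →* G
  surjective_hom : Function.Surjective hom
  orderOf_eq (i j : B) : M i j = orderOf (hom (M.simple i) * hom (M.simple j))
  hom_simple_ne_one (i : B) : hom (M.simple i) ≠ 1

namespace PreCoxeterSystem

variable {M G} (S : PreCoxeterSystem M G)

/-- The length of an element `g : G` is the minimal Coxeter length among the preimages of
`g` under `S.hom`; equivalently, the minimal length of a word of generators expressing `g`. -/
noncomputable def length (g : G) : ℕ :=
  sInf (M.toCoxeterSystem.length '' (S.hom ⁻¹' {g}))

/-- A word of generators is *reduced* if the length of its image in `G` equals the length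
of the word. -/
def IsReduced (ω : List B) : Prop :=
  S.length (S.hom (M.toCoxeterSystem.wordProd ω)) = ω.length

/-- The *exchange property* for a pre-Coxeter system: if a word of generators `ω = s₁⋯sₖ` is
reduced and multiplying on the left by a generator `b` does not increase the length, then
there exists `i < k` such that the image of `b :: ω` equals the image of `ω` with its
`i`-th letter erased. -/
def ExchangeProperty : Prop :=
  ∀ (ω : List B), S.IsReduced ω → ∀ b : B,
    S.length (S.hom (M.toCoxeterSystem.wordProd (b :: ω))) ≤ ω.length →
      ∃ i < ω.length,
        S.hom (M.toCoxeterSystem.wordProd (b :: ω)) =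
          S.hom (M.toCoxeterSystem.wordProd (ω.eraseIdx i))

local notation "cs" => CoxeterMatrix.toCoxeterSystem M

/-! ### Auxiliary definitions and lemmas -/

/-- The alternating word `x y x y ⋯` of length `j`, starting with `x`. -/
private def altW (x y : B) : ℕ → List B
  | 0 => []
  | j + 1 => x :: altW y x j

@[simp] private theorem altW_length (x y : B) (j : ℕ) : (altW x y j).length = j := by
  induction j generalizing x y with
  | zero => rfl
  | succ j ih => simp [altW, ih]

private theorem altW_take : ∀ (m : ℕ) (x y : B) (j : ℕ), m ≤ j →
    (altW x y j).take m = altW x y m := by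
  intro m
  induction m with
  | zero => intro x y j _; rfl
  | succ m ih =>
    intro x y j hm
    obtain ⟨j', rfl⟩ : ∃ j', j = j' + 1 := ⟨j - 1, by omega⟩
    show (x :: altW y x j').take (m + 1) = x :: altW y x m
    rw [List.take_cons (by omega)]
    norm_num
    rw [ih y x j' (by omega)]

private theorem eraseIdx_append_right :
    ∀ (l₁ l₂ : List B) (i : ℕ), l₁.length ≤ i →
      (l₁ ++ l₂).eraseIdx i = l₁ ++ l₂.eraseIdx (i - l₁.length) := by
  intro l₁
  induction l₁ with
  | nil => intro l₂ i _; simp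
  | cons a l ih =>
    intro l₂ i hi
    obtain ⟨i', rfl⟩ : ∃ i', i = i' + 1 := ⟨i - 1, by simp at hi; omega⟩
    show (a :: (l ++ l₂)).eraseIdx (i' + 1) = a :: (l ++ l₂.eraseIdx (i' + 1 - (a :: l).length))
    rw [List.eraseIdx_cons_succ, ih l₂ i' (by simp at hi; omega),
      show i' + 1 - (a :: l).length = i' - l.length from by
        simp only [List.length_cons]; omega]

/-- Key dihedral identity for products of alternating words of involutions. -/
private theorem alt_key {H : Type*} [Group H] (f : B → H) (hf : ∀ x, f x * f x = 1) :
    ∀ (m : ℕ) (x y : B),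
      ((altW x y m).map f).prod * (((altW y x m).map f).prod)⁻¹ = (f x * f y) ^ m := by
  intro m
  induction m with
  | zero => intro x y; simp [altW]
  | succ m ih =>
    intro x y
    have hinv : ∀ z, (f z)⁻¹ = f z := fun z => inv_eq_of_mul_eq_one_right (hf z)
    have hsc : f x * (f y * f x) ^ m = (f x * f y) ^ m * f x :=
      SemiconjBy.pow_right (by simp [SemiconjBy, mul_assoc]) m
    show (f x * ((altW y x m).map f).prod) * ((f y * ((altW x y m).map f).prod))⁻¹ = _
    rw [mul_inv_rev, hinv y]
    calc (f x * ((altW y x m).map f).prod) * ((((altW x y m).map f).prod)⁻¹ * f y)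
        = f x * (((altW y x m).map f).prod * (((altW x y m).map f).prod)⁻¹) * f y := by
          simp [mul_assoc]
      _ = f x * (f y * f x) ^ m * f y := by rw [ih y x]
      _ = (f x * f y) ^ m * f x * f y := by rw [hsc]
      _ = (f x * f y) ^ (m + 1) := by rw [pow_succ, mul_assoc]

private theorem hom_wordProd (ω : List B) :
    S.hom ((cs).wordProd ω) = (ω.map (fun b => S.hom ((cs).simple b))).prod := by
  rw [CoxeterSystem.wordProd, map_list_prod, List.map_map]
  rfl

private theorem simple_sq' (b : B) : S.hom ((cs).simple b) * S.hom ((cs).simple b) = 1 := by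
  rw [← map_mul, CoxeterSystem.simple_mul_simple_self, map_one]

private theorem length_le_length (w : M.Group) : S.length (S.hom w) ≤ (cs).length w :=
  Nat.sInf_le ⟨w, rfl, rfl⟩

private theorem exists_min (g : G) : ∃ w, S.hom w = g ∧ (cs).length w = S.length g := by
  obtain ⟨w, hw⟩ := S.surjective_hom g
  have hne : ((cs).length '' (S.hom ⁻¹' {g})).Nonempty := ⟨(cs).length w, w, by simp [hw], rfl⟩
  obtain ⟨w', hw', hl⟩ := Nat.sInf_mem hne
  exact ⟨w', hw', hl⟩

private theorem length_le_of_word (ω : List B) :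
    S.length (S.hom ((cs).wordProd ω)) ≤ ω.length :=
  le_trans (S.length_le_length _) ((cs).length_wordProd_le ω)

private theorem length_smul_le (b : B) (g : G) :
    S.length (S.hom ((cs).simple b) * g) ≤ S.length g + 1 := by
  obtain ⟨w, hw, hl⟩ := S.exists_min g
  calc S.length (S.hom ((cs).simple b) * g) ≤ (cs).length ((cs).simple b * w) := by
        rw [← hw, ← map_mul]; exact S.length_le_length _
    _ ≤ (cs).length ((cs).simple b) + (cs).length w := (cs).length_mul_le _ _
    _ ≤ S.length g + 1 := by rw [(cs).length_simple, hl]; omega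

private theorem length_le_smul (b : B) (g : G) :
    S.length g ≤ S.length (S.hom ((cs).simple b) * g) + 1 := by
  have := S.length_smul_le b (S.hom ((cs).simple b) * g)
  rwa [← mul_assoc, S.simple_sq', one_mul] at this

private theorem length_eq_zero_iff {g : G} : S.length g = 0 ↔ g = 1 := by
  constructor
  · intro hg
    obtain ⟨w, hw, hl⟩ := S.exists_min g
    rw [hg, CoxeterSystem.length_eq_zero_iff] at hl
    rw [← hw, hl, map_one]
  · rintro rfl
    have h := S.length_le_of_word []
    simpa using h

private theorem hom_tail (b : B) (ω : List B) :
    S.hom ((cs).wordProd ω) = S.hom ((cs).simple b) * S.hom ((cs).wordProd (b :: ω)) := by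
  rw [(cs).wordProd_cons, map_mul, ← mul_assoc, S.simple_sq', one_mul]

private theorem isReduced_cons_tail {b : B} {ω : List B} (hr : S.IsReduced (b :: ω)) :
    S.IsReduced ω := by
  unfold IsReduced at *
  have h1 : S.length (S.hom ((cs).wordProd ω)) ≤ ω.length := S.length_le_of_word ω
  have h2 : S.hom ((cs).wordProd (b :: ω))
      = S.hom ((cs).simple b) * S.hom ((cs).wordProd ω) := by
    rw [(cs).wordProd_cons, map_mul]
  have h3 := S.length_smul_le b (S.hom ((cs).wordProd ω))
  rw [← h2, hr] at h3
  simp only [List.length_cons] at h3 ⊢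
  omega

private theorem take_alt (x y : B) (j : ℕ) (σ : List B) :
    (altW x y j ++ σ).take j = altW x y j := by
  rw [List.take_append_of_le_length (by simp), List.take_of_length_le (by simp)]

/-! ### The main uniqueness lemma -/

private theorem unique_min (h : S.ExchangeProperty) :
    ∀ (k : ℕ) (ω ω' : List B), ω.length = k → ω'.length = k → S.IsReduced ω →
      S.IsReduced ω' → S.hom ((cs).wordProd ω) = S.hom ((cs).wordProd ω') →
      (cs).wordProd ω = (cs).wordProd ω' := by
  intro k
  induction k using Nat.strong_induction_on with
  | _ k IH =>
  -- two reduced words of length `k` with equal heads and equal images have equal products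
  have cons_eq : ∀ (b : B) (α α' : List B), α.length + 1 = k → α'.length + 1 = k →
      S.IsReduced (b :: α) → S.IsReduced (b :: α') →
      S.hom ((cs).wordProd (b :: α)) = S.hom ((cs).wordProd (b :: α')) →
      (cs).wordProd (b :: α) = (cs).wordProd (b :: α') := by
    intro b α α' h1 h2 hr1 hr2 him
    have himt : S.hom ((cs).wordProd α) = S.hom ((cs).wordProd α') := by
      rw [S.hom_tail b α, S.hom_tail b α', him]
    have := IH (k - 1) (by omega) α α' (by omega) (by omega)
      (S.isReduced_cons_tail hr1) (S.isReduced_cons_tail hr2) himt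
    rw [(cs).wordProd_cons, (cs).wordProd_cons, this]
  -- the "finish" step: exchange happened inside the alternating prefix
  have finish : ∀ (b b' : B) (j : ℕ) (ρ ν : List B), 1 ≤ j →
      (altW b b' j ++ ρ).length = k → ν.length = k →
      ν.take j = altW b' b j →
      S.IsReduced (altW b b' j ++ ρ) → S.IsReduced ν →
      S.hom ((cs).wordProd (altW b b' j ++ ρ)) = S.hom ((cs).wordProd ν) →
      ∀ i, i < j →
      S.hom ((cs).wordProd (b :: ν)) = S.hom ((cs).wordProd (ν.eraseIdx i)) →
      (cs).wordProd (altW b b' j ++ ρ) = (cs).wordProd ν := by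
    intro b b' j ρ ν hj hμlen hνlen hνtake hrμ hrν him i hij hex
    have hjρ : j + ρ.length = k := by simpa using hμlen
    have htake1 : ν.take (i + 1) = altW b' b (i + 1) := by
      have h1 : ν.take (i + 1) = (ν.take j).take (i + 1) := by
        rw [List.take_take, min_eq_left (by omega)]
      rw [h1, hνtake, altW_take (i + 1) b' b j (by omega)]
    have htakei : ν.take i = altW b' b i := by
      have h1 : ν.take i = (ν.take j).take i := by
        rw [List.take_take, min_eq_left (by omega)]
      rw [h1, hνtake, altW_take i b' b j (by omega)]
    have herase : ν.eraseIdx i = altW b' b i ++ ν.drop (i + 1) := by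
      rw [List.eraseIdx_eq_take_drop_succ, htakei]
    have hsplit : altW b' b (i + 1) ++ ν.drop (i + 1) = ν := by
      rw [← htake1, List.take_append_drop]
    -- the key equation in `G`
    have hkey : S.hom ((cs).simple b) * S.hom ((cs).wordProd (altW b' b (i + 1)))
        = S.hom ((cs).wordProd (altW b' b i)) := by
      have e1 : S.hom ((cs).wordProd (b :: ν))
          = S.hom ((cs).simple b) *
            (S.hom ((cs).wordProd (altW b' b (i + 1))) * S.hom ((cs).wordProd (ν.drop (i + 1)))) := by
        conv_rhs => rw [← map_mul, ← (cs).wordProd_append, hsplit]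
        rw [(cs).wordProd_cons, map_mul]
      have e2 : S.hom ((cs).wordProd (ν.eraseIdx i))
          = S.hom ((cs).wordProd (altW b' b i)) * S.hom ((cs).wordProd (ν.drop (i + 1))) := by
        rw [herase, (cs).wordProd_append, map_mul]
      rw [e1, e2, ← mul_assoc] at hex
      exact mul_right_cancel hex
    have hP : S.hom ((cs).wordProd (altW b b' (i + 1)))
        = S.hom ((cs).wordProd (altW b' b (i + 1))) := by
      have e3 : (altW b b' (i + 1)) = b :: altW b' b i := rfl
      rw [e3, (cs).wordProd_cons, map_mul, ← hkey, ← mul_assoc, S.simple_sq', one_mul]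
    -- deduce the braid-type relation in the Coxeter group
    have hpow : (S.hom ((cs).simple b) * S.hom ((cs).simple b')) ^ (i + 1) = 1 := by
      have hk := alt_key (fun x => S.hom ((cs).simple x)) (fun x => S.simple_sq' x) (i + 1) b b'
      rw [← S.hom_wordProd, ← S.hom_wordProd, hP, mul_inv_cancel] at hk
      exact hk.symm
    have hdvd : M b b' ∣ (i + 1) := by
      rw [S.orderOf_eq b b']
      apply orderOf_dvd_of_pow_eq_one
      rw [← CoxeterMatrix.toCoxeterSystem_simple]
      exact hpow
    have hWpow : ((cs).simple b * (cs).simple b') ^ (i + 1) = 1 := by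
      obtain ⟨c, hc⟩ := hdvd
      rw [hc, pow_mul, (cs).simple_mul_simple_pow, one_pow]
    have hWalt : (cs).wordProd (altW b b' (i + 1)) = (cs).wordProd (altW b' b (i + 1)) := by
      have hk := alt_key (cs).simple (fun x => (cs).simple_mul_simple_self x) (i + 1) b b'
      have hwp : ∀ (x y : B) (m : ℕ),
          ((altW x y m).map (cs).simple).prod = (cs).wordProd (altW x y m) := fun _ _ _ => rfl
      rw [hwp, hwp, hWpow] at hk
      exact mul_inv_eq_one.mp hk
    -- the new reduced word starting with `b`
    have hwpν' : (cs).wordProd (altW b b' (i + 1) ++ ν.drop (i + 1)) = (cs).wordProd ν := by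
      rw [(cs).wordProd_append, hWalt, ← (cs).wordProd_append, hsplit]
    have himν' : S.hom ((cs).wordProd (altW b b' (i + 1) ++ ν.drop (i + 1)))
        = S.hom ((cs).wordProd ν) := by rw [hwpν']
    have hν'len : (altW b b' (i + 1) ++ ν.drop (i + 1)).length = k := by
      simp only [List.length_append, altW_length, List.length_drop]
      omega
    have hrν' : S.IsReduced (altW b b' (i + 1) ++ ν.drop (i + 1)) := by
      unfold IsReduced at hrν ⊢
      rw [himν', hrν, hνlen, hν'len]
    obtain ⟨j', rfl⟩ : ∃ j', j = j' + 1 := ⟨j - 1, by omega⟩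
    have hμcons : altW b b' (j' + 1) ++ ρ = b :: (altW b' b j' ++ ρ) := rfl
    have hν'cons : altW b b' (i + 1) ++ ν.drop (i + 1)
        = b :: (altW b' b i ++ ν.drop (i + 1)) := rfl
    rw [← hwpν', hμcons, hν'cons]
    apply cons_eq b _ _
      (by simp only [List.length_append, altW_length] at hμlen ⊢; omega)
      (by simp only [List.length_append, altW_length, List.length_drop] at hν'len ⊢; omega)
      (hμcons ▸ hrμ) (hν'cons ▸ hrν')
    rw [← hμcons, ← hν'cons]
    exact him.trans himν'.symm
  -- the inner induction: growing alternating prefixes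
  have inner : ∀ (d : ℕ) (j : ℕ) (b b' : B) (ρ σ : List B), 1 ≤ j → j + d = k →
      ρ.length = d → σ.length = d →
      S.IsReduced (altW b b' j ++ ρ) → S.IsReduced (altW b' b j ++ σ) →
      S.hom ((cs).wordProd (altW b b' j ++ ρ)) = S.hom ((cs).wordProd (altW b' b j ++ σ)) →
      (cs).wordProd (altW b b' j ++ ρ) = (cs).wordProd (altW b' b j ++ σ) := by
    intro d
    induction d with
    | zero =>
      intro j b b' ρ σ hj hjd hρ hσ hrμ hrν him
      obtain ⟨j', rfl⟩ : ∃ j', j = j' + 1 := ⟨j - 1, by omega⟩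
      have hμc : altW b b' (j' + 1) ++ ρ = b :: (altW b' b j' ++ ρ) := rfl
      have hμlen : (altW b b' (j' + 1) ++ ρ).length = k := by simp; omega
      have hνlen : (altW b' b (j' + 1) ++ σ).length = k := by simp; omega
      have hle : S.length (S.hom ((cs).wordProd (b :: (altW b' b (j' + 1) ++ σ))))
          ≤ (altW b' b (j' + 1) ++ σ).length := by
        have e : S.hom ((cs).wordProd (b :: (altW b' b (j' + 1) ++ σ)))
            = S.hom ((cs).wordProd (altW b' b j' ++ ρ)) := by
          rw [(cs).wordProd_cons, map_mul, ← him, hμc, S.hom_tail b (altW b' b j' ++ ρ)]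
        rw [e, hνlen]
        exact le_trans (S.length_le_of_word _) (by simp; omega)
      obtain ⟨i, hi, hex⟩ := h (altW b' b (j' + 1) ++ σ) hrν b hle
      rw [hνlen] at hi
      exact finish b b' (j' + 1) ρ (altW b' b (j' + 1) ++ σ) hj hμlen hνlen
        (take_alt b' b (j' + 1) σ) hrμ hrν him i (by omega) hex
    | succ d ihd =>
      intro j b b' ρ σ hj hjd hρ hσ hrμ hrν him
      obtain ⟨j', rfl⟩ : ∃ j', j = j' + 1 := ⟨j - 1, by omega⟩
      have hμc : altW b b' (j' + 1) ++ ρ = b :: (altW b' b j' ++ ρ) := rfl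
      have hνc : altW b' b (j' + 1) ++ σ = b' :: (altW b b' j' ++ σ) := rfl
      have hμlen : (altW b b' (j' + 1) ++ ρ).length = k := by simp; omega
      have hνlen : (altW b' b (j' + 1) ++ σ).length = k := by simp; omega
      -- first exchange, with letter b on the second word
      have hle : S.length (S.hom ((cs).wordProd (b :: (altW b' b (j' + 1) ++ σ))))
          ≤ (altW b' b (j' + 1) ++ σ).length := by
        have e : S.hom ((cs).wordProd (b :: (altW b' b (j' + 1) ++ σ)))
            = S.hom ((cs).wordProd (altW b' b j' ++ ρ)) := by
          rw [(cs).wordProd_cons, map_mul, ← him, hμc, S.hom_tail b (altW b' b j' ++ ρ)]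
        rw [e, hνlen]
        exact le_trans (S.length_le_of_word _) (by simp; omega)
      obtain ⟨i, hi, hex⟩ := h (altW b' b (j' + 1) ++ σ) hrν b hle
      rw [hνlen] at hi
      by_cases hij : i < j' + 1
      · exact finish b b' (j' + 1) ρ (altW b' b (j' + 1) ++ σ) hj hμlen hνlen
          (take_alt b' b (j' + 1) σ) hrμ hrν him i hij hex
      push_neg at hij
      -- second exchange, with letter b' on the first word
      have hle' : S.length (S.hom ((cs).wordProd (b' :: (altW b b' (j' + 1) ++ ρ))))
          ≤ (altW b b' (j' + 1) ++ ρ).length := by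
        have e : S.hom ((cs).wordProd (b' :: (altW b b' (j' + 1) ++ ρ)))
            = S.hom ((cs).wordProd (altW b b' j' ++ σ)) := by
          rw [(cs).wordProd_cons, map_mul, him, hνc, S.hom_tail b' (altW b b' j' ++ σ)]
        rw [e, hμlen]
        exact le_trans (S.length_le_of_word _) (by simp; omega)
      obtain ⟨i', hi', hex'⟩ := h (altW b b' (j' + 1) ++ ρ) hrμ b' hle'
      rw [hμlen] at hi'
      by_cases hij' : i' < j' + 1
      · exact (finish b' b (j' + 1) σ (altW b b' (j' + 1) ++ ρ) hj hνlen hμlen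
          (take_alt b b' (j' + 1) ρ) hrν hrμ him.symm i' hij' hex').symm
      push_neg at hij'
      -- grow both alternating prefixes
      have herase : (altW b' b (j' + 1) ++ σ).eraseIdx i
          = altW b' b (j' + 1) ++ σ.eraseIdx (i - (j' + 1)) := by
        rw [eraseIdx_append_right _ _ _ (by simpa using hij), altW_length]
      have herase' : (altW b b' (j' + 1) ++ ρ).eraseIdx i'
          = altW b b' (j' + 1) ++ ρ.eraseIdx (i' - (j' + 1)) := by
        rw [eraseIdx_append_right _ _ _ (by simpa using hij'), altW_length]
      have hμ2c : altW b b' (j' + 1 + 1) ++ σ.eraseIdx (i - (j' + 1))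
          = b :: (altW b' b (j' + 1) ++ σ.eraseIdx (i - (j' + 1))) := rfl
      have hν2c : altW b' b (j' + 1 + 1) ++ ρ.eraseIdx (i' - (j' + 1))
          = b' :: (altW b b' (j' + 1) ++ ρ.eraseIdx (i' - (j' + 1))) := rfl
      have hσe : (σ.eraseIdx (i - (j' + 1))).length = d := by
        have := List.length_eraseIdx_add_one (l := σ) (i := i - (j' + 1)) (by omega)
        omega
      have hρe : (ρ.eraseIdx (i' - (j' + 1))).length = d := by
        have := List.length_eraseIdx_add_one (l := ρ) (i := i' - (j' + 1)) (by omega)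
        omega
      -- images of the new words
      have himμ2 : S.hom ((cs).wordProd (altW b b' (j' + 1 + 1) ++ σ.eraseIdx (i - (j' + 1))))
          = S.hom ((cs).wordProd (altW b' b (j' + 1) ++ σ)) := by
        rw [hμ2c, ← herase, (cs).wordProd_cons, map_mul, ← hex, (cs).wordProd_cons, map_mul,
          ← mul_assoc, S.simple_sq', one_mul]
      have himν2 : S.hom ((cs).wordProd (altW b' b (j' + 1 + 1) ++ ρ.eraseIdx (i' - (j' + 1))))
          = S.hom ((cs).wordProd (altW b b' (j' + 1) ++ ρ)) := by
        rw [hν2c, ← herase', (cs).wordProd_cons, map_mul, ← hex', (cs).wordProd_cons, map_mul,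
          ← mul_assoc, S.simple_sq', one_mul]
      -- the new words are reduced
      have hμ2len : (altW b b' (j' + 1 + 1) ++ σ.eraseIdx (i - (j' + 1))).length = k := by
        simp only [List.length_append, altW_length, hσe]; omega
      have hν2len : (altW b' b (j' + 1 + 1) ++ ρ.eraseIdx (i' - (j' + 1))).length = k := by
        simp only [List.length_append, altW_length, hρe]; omega
      have hrμ2 : S.IsReduced (altW b b' (j' + 1 + 1) ++ σ.eraseIdx (i - (j' + 1))) := by
        unfold IsReduced at hrν ⊢
        rw [himμ2, hrν, hνlen, hμ2len]
      have hrν2 : S.IsReduced (altW b' b (j' + 1 + 1) ++ ρ.eraseIdx (i' - (j' + 1))) := by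
        unfold IsReduced at hrμ ⊢
        rw [himν2, hrμ, hμlen, hν2len]
      -- products of the new words agree with the old ones
      have hwpμ2 : (cs).wordProd (altW b b' (j' + 1 + 1) ++ σ.eraseIdx (i - (j' + 1)))
          = (cs).wordProd (altW b b' (j' + 1) ++ ρ) := by
        rw [hμ2c, hμc]
        apply cons_eq b _ _ (by simp only [List.length_append, altW_length, hσe]; omega)
          (by simp only [List.length_append, altW_length, hρ]; omega)
          (hμ2c ▸ hrμ2) (hμc ▸ hrμ)
        rw [← hμ2c, ← hμc, himμ2, him]
      have hwpν2 : (cs).wordProd (altW b' b (j' + 1 + 1) ++ ρ.eraseIdx (i' - (j' + 1)))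
          = (cs).wordProd (altW b' b (j' + 1) ++ σ) := by
        rw [hν2c, hνc]
        apply cons_eq b' _ _ (by simp only [List.length_append, altW_length, hρe]; omega)
          (by simp only [List.length_append, altW_length, hσ]; omega)
          (hν2c ▸ hrν2) (hνc ▸ hrν)
        rw [← hν2c, ← hνc, himν2, him.symm]
      -- recurse
      have hrec := ihd (j' + 1 + 1) b b' (σ.eraseIdx (i - (j' + 1))) (ρ.eraseIdx (i' - (j' + 1)))
        (by omega) (by omega) hσe hρe hrμ2 hrν2
        (by rw [himμ2, himν2, him])
      rw [← hwpμ2, ← hwpν2, hrec]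
  -- conclude
  intro ω ω' hω hω' hr hr' him
  match ω, ω' with
  | [], [] => rfl
  | [], (b' :: σ) => simp at hω hω'; omega
  | (b :: ρ), [] => simp at hω hω'; omega
  | (b :: ρ), (b' :: σ) =>
    exact inner (k - 1) 1 b b' ρ σ le_rfl (by simp at hω; omega)
      (by simp at hω; omega) (by simp at hω'; omega) hr hr' him

/-! ### Conclusion -/

/-- if a pre-Coxeter system `S` satisfies the exchange property, then
`S.hom : M.Group →* G` is injective (hence an isomorphism, making `G` a Coxeter group
with matrix `M`). -/
theorem injective_hom_of_exchangeProperty (h : S.ExchangeProperty) :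
    Function.Injective S.hom := by
  -- uniqueness of minimal-length preimages
  have uniq : ∀ (w w' : M.Group), S.hom w = S.hom w' →
      (cs).length w = S.length (S.hom w) → (cs).length w' = S.length (S.hom w') → w = w' := by
    intro w w' he hl hl'
    obtain ⟨ω, hω1, hω2⟩ := (cs).exists_reduced_word w
    replace hω1 : ω.length = (cs).length w := by rw [hω2]; exact Eq.symm hω1
    obtain ⟨ω', hω'1, hω'2⟩ := (cs).exists_reduced_word w'
    replace hω'1 : ω'.length = (cs).length w' := by rw [hω'2]; exact Eq.symm hω'1
    have hred : S.IsReduced ω := by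
      unfold IsReduced; rw [← hω2, ← hl]; exact hω1.symm
    have hred' : S.IsReduced ω' := by
      unfold IsReduced; rw [← hω'2, ← hl']; exact hω'1.symm
    rw [hω2, hω'2]
    exact S.unique_min h (S.length (S.hom w)) ω ω' (by omega) (by rw [hω'1, hl', he])
      hred hred' (by rw [← hω2, ← hω'2, he])
  -- the inductive step: minimal preimages are compatible with multiplication by a generator
  have step : ∀ (b : B) (g : G) (w₀ w₁ : M.Group), S.hom w₀ = g →
      (cs).length w₀ = S.length g →
      S.hom w₁ = S.hom ((cs).simple b) * g →
      (cs).length w₁ = S.length (S.hom ((cs).simple b) * g) →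
      w₁ = (cs).simple b * w₀ := by
    intro b g w₀ w₁ hw₀ hl₀ hw₁ hl₁
    by_cases hle : S.length (S.hom ((cs).simple b) * g) ≤ S.length g
    · -- the length decreases: use the exchange property
      obtain ⟨ω, hω1, hω2⟩ := (cs).exists_reduced_word w₀
      replace hω1 : ω.length = (cs).length w₀ := by rw [hω2]; exact Eq.symm hω1
      have hred : S.IsReduced ω := by
        unfold IsReduced; rw [← hω2, hw₀, hω1, hl₀]
      have hlword : S.length (S.hom ((cs).wordProd (b :: ω))) ≤ ω.length := by
        rw [(cs).wordProd_cons, map_mul, ← hω2, hw₀, hω1, hl₀]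
        exact hle
      obtain ⟨i, hi, hex⟩ := h ω hred b hlword
      have hu : S.hom ((cs).wordProd (ω.eraseIdx i)) = S.hom ((cs).simple b) * g := by
        rw [← hex, (cs).wordProd_cons, map_mul, ← hω2, hw₀]
      have hωg : ω.length = S.length g := by rw [hω1, hl₀]
      have helen : (ω.eraseIdx i).length + 1 = ω.length := List.length_eraseIdx_add_one hi
      have h2 : S.length (S.hom ((cs).simple b) * g) ≤ (ω.eraseIdx i).length := by
        rw [← hu]; exact S.length_le_of_word _
      have h3 := S.length_le_smul b g
      -- so the length goes down by exactly one
      have hLbg : S.length (S.hom ((cs).simple b) * g) + 1 = S.length g := by omega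
      have hℓu : (cs).length ((cs).wordProd (ω.eraseIdx i))
          = S.length (S.hom ((cs).wordProd (ω.eraseIdx i))) := by
        have ha := S.length_le_length ((cs).wordProd (ω.eraseIdx i))
        have hb := (cs).length_wordProd_le (ω.eraseIdx i)
        rw [hu] at ha ⊢
        omega
      have hw₁u : w₁ = (cs).wordProd (ω.eraseIdx i) := by
        apply uniq
        · rw [hw₁, hu]
        · rw [hw₁]; exact hl₁
        · exact hℓu
      have hsbu : (cs).simple b * (cs).wordProd (ω.eraseIdx i) = w₀ := by
        apply uniq
        · rw [map_mul, hu, ← mul_assoc, S.simple_sq', one_mul, hw₀]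
        · have ha : (cs).length ((cs).simple b * (cs).wordProd (ω.eraseIdx i))
              ≤ 1 + (cs).length ((cs).wordProd (ω.eraseIdx i)) := by
            have := (cs).length_mul_le ((cs).simple b) ((cs).wordProd (ω.eraseIdx i))
            rwa [(cs).length_simple] at this
          have hb := S.length_le_length ((cs).simple b * (cs).wordProd (ω.eraseIdx i))
          have hc : S.hom ((cs).simple b * (cs).wordProd (ω.eraseIdx i)) = g := by
            rw [map_mul, hu, ← mul_assoc, S.simple_sq', one_mul]
          rw [hc] at hb ⊢
          have hd := (cs).length_wordProd_le (ω.eraseIdx i)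
          omega
        · rw [hw₀]; exact hl₀
      rw [hw₁u, ← hsbu, ← mul_assoc, CoxeterSystem.simple_mul_simple_self, one_mul]
    · -- the length increases
      push_neg at hle
      have hup := S.length_smul_le b g
      apply uniq
      · rw [hw₁, map_mul, hw₀]
      · rw [hw₁]; exact hl₁
      · have e : S.hom ((cs).simple b * w₀) = S.hom ((cs).simple b) * g := by
          rw [map_mul, hw₀]
        have h1 : (cs).length ((cs).simple b * w₀) ≤ 1 + (cs).length w₀ := by
          have := (cs).length_mul_le ((cs).simple b) w₀
          rwa [(cs).length_simple] at this
        have h2 := S.length_le_length ((cs).simple b * w₀)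
        rw [e] at h2 ⊢
        omega
  -- every element of the Coxeter group is the unique minimal preimage of its image
  have main : ∀ (ω : List B) (w₁ : M.Group), S.hom w₁ = S.hom ((cs).wordProd ω) →
      (cs).length w₁ = S.length (S.hom ((cs).wordProd ω)) → w₁ = (cs).wordProd ω := by
    intro ω
    induction ω with
    | nil =>
      intro w₁ h1 h2
      rw [(cs).wordProd_nil, map_one] at h1 h2
      have hz : S.length (1 : G) = 0 :=
        Nat.le_antisymm (by simpa using S.length_le_of_word []) (Nat.zero_le _)
      rw [hz] at h2
      rw [(cs).wordProd_nil]
      exact (CoxeterSystem.length_eq_zero_iff (cs)).mp h2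
    | cons b ω ih =>
      intro w₁ h1 h2
      obtain ⟨w₀, hw₀, hl₀⟩ := S.exists_min (S.hom ((cs).wordProd ω))
      have hw₀' : w₀ = (cs).wordProd ω := ih w₀ hw₀ hl₀
      have h1' : S.hom w₁ = S.hom ((cs).simple b) * S.hom ((cs).wordProd ω) := by
        rw [h1, (cs).wordProd_cons, map_mul]
      have h2' : (cs).length w₁
          = S.length (S.hom ((cs).simple b) * S.hom ((cs).wordProd ω)) := by
        rw [h2, (cs).wordProd_cons, map_mul]
      have := step b (S.hom ((cs).wordProd ω)) w₀ w₁ hw₀ hl₀ h1' h2'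
      rw [this, hw₀', (cs).wordProd_cons]
  -- conclusion
  intro w w' he
  obtain ⟨ω, hω⟩ := (cs).wordProd_surjective w
  obtain ⟨ω', hω'⟩ := (cs).wordProd_surjective w'
  obtain ⟨u, hu, hlu⟩ := S.exists_min (S.hom w)
  have h1 : u = w := by
    rw [← hω]
    exact main ω u (by rw [hu, hω]) (by rw [hω]; exact hlu)
  have h2 : u = w' := by
    rw [← hω']
    exact main ω' u (by rw [hu, he, hω']) (by rw [hω', ← he]; exact hlu)
  rw [← h1, h2]

end PreCoxeterSystem
end

section
/- For any Coxeter matrix M on a set I, the Coxeter group associated to M is also presented as a monoid by the same generators and relations: the kernel congruence of the canonical monoid homomorphism from the free monoid on I to the Coxeter group is the smallest multiplicative congruence on the free monoid containing the relations (s_i s_j)^{M(i,j)} ~ 1 for all i, j in I. -/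
variable {I : Type*} (M : CoxeterMatrix I)

/-- The Coxeter relations on the free monoid on `I`: for all `i, j`, the word
`(s_i s_j) ^ M i j` is related to the empty word. -/
inductive CoxeterMonoidRelations : FreeMonoid I → FreeMonoid I → Prop
  | intro (i j : I) :
      CoxeterMonoidRelations ((FreeMonoid.of i * FreeMonoid.of j) ^ M i j) 1

/-- The canonical monoid homomorphism from the free monoid on `I` to the Coxeter group of
`M`, sending the generator `i` to the simple reflection `s_i`. -/
def freeMonoidToCoxeter : FreeMonoid I →* M.Group :=
  FreeMonoid.lift fun i => M.simple i

/-- the Coxeter group of `M` is presented as a monoid by the same generators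
and relations: the kernel congruence of the canonical monoid homomorphism
`FreeMonoid I →* M.Group` is the smallest multiplicative congruence on the free monoid
containing the relations `(s_i s_j) ^ M i j ~ 1`. -/
theorem con_ker_freeMonoidToCoxeter :
    Con.ker (freeMonoidToCoxeter M) = conGen (CoxeterMonoidRelations M) := by
  set c := conGen (CoxeterMonoidRelations M) with hc
  -- the quotient monoid satisfies the Coxeter relations
  have hf : CoxeterMatrix.IsLiftable M (fun i => (c.mk' (FreeMonoid.of i) : c.Quotient)) := by
    intro i j
    have h : c ((FreeMonoid.of i * FreeMonoid.of j) ^ M i j) 1 :=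
      ConGen.Rel.of _ _ (CoxeterMonoidRelations.intro i j)
    have := (Con.eq c).mpr h
    simpa only [map_pow, map_mul, map_one] using (show c.mk' ((FreeMonoid.of i * FreeMonoid.of j) ^ M i j) = c.mk' 1 from this)
  -- the induced homomorphism from the Coxeter group to the quotient monoid
  set φ : M.Group →* c.Quotient := M.toCoxeterSystem.lift ⟨_, hf⟩ with hφ
  have hφs : ∀ i, φ (M.simple i) = c.mk' (FreeMonoid.of i) := fun i => by
    rw [← M.toCoxeterSystem_simple]
    exact M.toCoxeterSystem.lift_apply_simple hf i
  have hcomp : φ.comp (freeMonoidToCoxeter M) = c.mk' := by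
    apply FreeMonoid.hom_eq
    intro i
    simp [freeMonoidToCoxeter, hφs]
  apply le_antisymm
  · -- ker ≤ conGen
    intro a b hab
    have hab' : freeMonoidToCoxeter M a = freeMonoidToCoxeter M b := hab
    have : c.mk' a = c.mk' b := by
      rw [← hcomp]
      simp [MonoidHom.comp_apply, hab']
    exact (Con.eq c).mp this
  · -- conGen ≤ ker
    apply Con.conGen_le.mpr
    rintro _ _ ⟨i, j⟩
    show freeMonoidToCoxeter M _ = freeMonoidToCoxeter M 1
    simp only [map_pow, map_mul, map_one, freeMonoidToCoxeter, FreeMonoid.lift_eval_of]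
    rw [← M.toCoxeterSystem_simple]
    exact M.toCoxeterSystem.simple_mul_simple_pow i j
end

section
/- If L₁ or L₂ is a linear symmetric list (its underlying list has no duplicates), then there is at most one morphism from L₁ to L₂ in the category of symmetric lists; in particular, the type of morphisms L₁ ⟶ L₂ is a subsingleton. -/
universe u

open CategoryTheory

namespace SListDev

/-- A wrapper around `List C`, serving as the type of objects of the quiver generating
the category of symmetric lists. -/
structure SL (C : Type u) where
  toList : List C

variable {C : Type u}

/-- Consing an element onto a symmetric-list object. -/
def SL.cons (z : C) (a : SL C) : SL C := ⟨z :: a.toList⟩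

/-- Generating morphisms for the category of symmetric lists: adjacent swaps and
cons of a generating morphism. -/
inductive Gen : SL C → SL C → Type u
  | swap (x y : C) (l : List C) : Gen ⟨x :: y :: l⟩ ⟨y :: x :: l⟩
  | cons (z : C) {l l' : List C} : Gen ⟨l⟩ ⟨l'⟩ → Gen ⟨z :: l⟩ ⟨z :: l'⟩

instance : Quiver (SL C) := ⟨Gen⟩

/-- The free category on the generating quiver of symmetric lists. -/
abbrev FreeSL (C : Type u) := Paths (SL C)

/-- The extension of the `cons` operation to paths. -/
def consMap (z : C) : ∀ {a b : SL C}, Quiver.Path a b → Quiver.Path (SL.cons z a) (SL.cons z b)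
  | _, _, Quiver.Path.nil => Quiver.Path.nil
  | _, _, Quiver.Path.cons p g => (consMap z p).cons (Gen.cons z g)

/-- The path consisting of a single swap. -/
def swapPath (x y : C) (l : List C) :
    Quiver.Path (⟨x :: y :: l⟩ : SL C) (⟨y :: x :: l⟩ : SL C) :=
  Quiver.Hom.toPath (Gen.swap x y l)

/-- The relations defining the category of symmetric lists: naturality of the swap,
the symmetry relation, the hexagon (Yang–Baxter) relation, and functoriality
(congruence) of `cons`. -/
inductive Rel : HomRel (FreeSL C)
  | swap_naturality (X Y : C) {l l' : SL C} (f : Quiver.Path l l') :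
      Rel ((swapPath X Y l.toList).comp (consMap Y (consMap X f)))
          ((consMap X (consMap Y f)).comp (swapPath X Y l'.toList))
  | swap_swap (X Y : C) (l : List C) :
      Rel ((swapPath X Y l).comp (swapPath Y X l)) Quiver.Path.nil
  | hexagon (X Y Z : C) (l : List C) :
      Rel ((swapPath X Y (Z :: l)).comp ((consMap Y (swapPath X Z l)).comp
            (swapPath Y Z (X :: l))))
          ((consMap X (swapPath Y Z l)).comp ((swapPath X Z (Y :: l)).comp
            (consMap Z (swapPath X Y l))))
  | cons (z : C) {l l' : SL C} (f f' : Quiver.Path l l') :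
      Rel f f' → Rel (consMap z f) (consMap z f')

end SListDev

/-- The category of symmetric lists on `C`, presented by generators and relations. -/
abbrev SList (C : Type u) := CategoryTheory.Quotient (SListDev.Rel (C := C))

namespace SList

variable {C : Type u}

/-- The symmetric list attached to a list. -/
def mk (l : List C) : SList C := ⟨⟨l⟩⟩

/-- The underlying list of a symmetric list. -/
def toList (L : SList C) : List C := L.as.toList

/-- The length of a symmetric list. -/
def length (L : SList C) : ℕ := L.toList.length

/-- The underlying multiset of a symmetric list. -/
def mult (L : SList C) : Multiset C := (L.toList : Multiset C)

end SList

namespace SListAux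

open SListDev SList

variable {C : Type u}

/-- the image in the quotient of a path -/
def homOf {a b : SL C} (p : Quiver.Path a b) : (⟨a⟩ : SList C) ⟶ (⟨b⟩ : SList C) :=
  (Quotient.functor (Rel (C := C))).map p

lemma relSound {a b : FreeSL C} {f g : a ⟶ b} (h : Rel f g) : homOf f = homOf g :=
  @CategoryTheory.Quotient.sound (FreeSL C) _ Rel a b f g h

lemma homOf_nil {a : SL C} : homOf (Quiver.Path.nil : Quiver.Path a a) = 𝟙 (⟨a⟩ : SList C) :=
  (Quotient.functor (Rel (C := C))).map_id a

lemma homOf_comp {a b c : SL C} (p : Quiver.Path a b) (q : Quiver.Path b c) :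
    homOf (p.comp q) = homOf p ≫ homOf q :=
  (Quotient.functor (Rel (C := C))).map_comp p q

lemma genPerm : ∀ {a b : SL C}, Gen a b → a.toList.Perm b.toList
  | _, _, .swap x y l => List.Perm.swap y x l
  | _, _, .cons z g => (genPerm g).cons z

lemma pathPerm : ∀ {a b : SL C}, Quiver.Path a b → a.toList.Perm b.toList
  | _, _, .nil => .refl _
  | _, _, .cons p g => (pathPerm p).trans (genPerm g)

/-- prefunctor sending a list to (z :: l) -/
def consPre (z : C) : Prefunctor (SL C) (SList C) where
  obj a := SList.mk (z :: a.toList)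
  map g := homOf (Quiver.Hom.toPath (Gen.cons z g))

lemma consMap_cons (z : C) {a b c : SL C} (p : Quiver.Path a b) (g : Gen b c) :
    consMap z (p.cons g) = (consMap z p).cons (Gen.cons z g) := by simp [consMap]; rfl

lemma comp_toPath {a b c : SL C} (p : Quiver.Path a b) (g : Gen b c) :
    p.comp (Quiver.Hom.toPath g) = p.cons g := rfl

lemma homOf_cons {a b c : SL C} (p : Quiver.Path a b) (g : Gen b c) :
    homOf (p.cons g) = homOf p ≫ homOf (Quiver.Hom.toPath g) := by
  rw [← comp_toPath, homOf_comp]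

lemma liftPre_map (z : C) : ∀ {a b : SL C} (p : Quiver.Path a b),
    (Paths.lift (consPre z)).map p = homOf (consMap z p)
  | _, _, Quiver.Path.nil => by
      rw [show consMap z (Quiver.Path.nil (a := _)) = Quiver.Path.nil from by simp [consMap]]
      exact homOf_nil.symm
  | _, _, Quiver.Path.cons p g => by
      rw [Paths.lift_cons, liftPre_map z p, consMap_cons]
      exact (homOf_cons _ _).symm

def consF (z : C) : SList C ⥤ SList C :=
  CategoryTheory.Quotient.lift (SListDev.Rel (C := C)) (Paths.lift (consPre z))
    (fun _ _ p q h => by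
      exact (liftPre_map z p).trans ((relSound (Rel.cons z p q h)).trans (liftPre_map z q).symm))

def consHom (z : C) {l l' : List C} (f : SList.mk l ⟶ SList.mk l') :
    SList.mk (z :: l) ⟶ SList.mk (z :: l') := (consF z).map f

lemma consHom_id (z : C) (l : List C) : consHom z (𝟙 (SList.mk l)) = 𝟙 (SList.mk (z :: l)) :=
  (consF z).map_id (SList.mk l)

lemma consHom_comp (z : C) {l₁ l₂ l₃ : List C} (f : SList.mk l₁ ⟶ SList.mk l₂)
    (g : SList.mk l₂ ⟶ SList.mk l₃) :
    consHom z (f ≫ g) = consHom z f ≫ consHom z g :=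
  (consF z).map_comp f g

lemma consHom_homOf (z : C) {a b : SL C} (p : Quiver.Path a b) :
    consHom z (homOf p) = homOf (consMap z p) :=
  (CategoryTheory.Quotient.lift_map_functor_map (SListDev.Rel (C := C))
    (Paths.lift (consPre z)) _ p).trans (liftPre_map z p)

def swapHom (x y : C) (l : List C) : SList.mk (x :: y :: l) ⟶ SList.mk (y :: x :: l) :=
  homOf (swapPath x y l)

lemma swap_swap (x y : C) (l : List C) :
    swapHom x y l ≫ swapHom y x l = 𝟙 (SList.mk (x :: y :: l)) := by
  have h := relSound (Rel.swap_swap x y l)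
  rw [homOf_comp (swapPath x y l) (swapPath y x l)] at h
  exact h.trans homOf_nil

lemma swap_nat (X Y : C) {l l' : List C} (f : SList.mk l ⟶ SList.mk l') :
    swapHom X Y l ≫ consHom Y (consHom X f) = consHom X (consHom Y f) ≫ swapHom X Y l' := by
  obtain ⟨p, rfl⟩ := (Quotient.functor (Rel (C := C))).map_surjective f
  show swapHom X Y l ≫ consHom Y (consHom X (homOf p))
      = consHom X (consHom Y (homOf p)) ≫ swapHom X Y l'
  erw [consHom_homOf, consHom_homOf, consHom_homOf, consHom_homOf]
  have h := relSound
    (Rel.swap_naturality X Y (l := ⟨l⟩) (l' := ⟨l'⟩) p)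
  erw [homOf_comp, homOf_comp] at h
  exact h

lemma hexagonHom (X Y Z : C) (w : List C) :
    swapHom X Y (Z :: w) ≫ consHom Y (swapHom X Z w) ≫ swapHom Y Z (X :: w)
      = consHom X (swapHom Y Z w) ≫ swapHom X Z (Y :: w) ≫ consHom Z (swapHom X Y w) := by
  have h := relSound (Rel.hexagon X Y Z w)
  erw [homOf_comp, homOf_comp, homOf_comp, homOf_comp] at h
  show swapHom X Y (Z :: w) ≫ consHom Y (homOf (swapPath X Z w)) ≫ swapHom Y Z (X :: w)
      = consHom X (homOf (swapPath Y Z w)) ≫ swapHom X Z (Y :: w)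
          ≫ consHom Z (homOf (swapPath X Y w))
  rw [consHom_homOf, consHom_homOf, consHom_homOf]
  exact h

def ins (a : C) : (pre : List C) → (post : List C) →
    (SList.mk (a :: (pre ++ post)) ⟶ SList.mk (pre ++ a :: post))
  | [], _post => 𝟙 _
  | b :: pre, post => swapHom a b (pre ++ post) ≫ consHom b (ins a pre post)

noncomputable def canon : (l l' : List C) → l.Perm l' → (SList.mk l ⟶ SList.mk l')
  | [], l', h => eqToHom (congrArg SList.mk h.symm.eq_nil).symm
  | a :: t, l', h =>
    have ha : a ∈ l' := h.subset List.mem_cons_self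
    have E2 := (List.append_of_mem ha).choose_spec
    have hsplit : l' = (List.append_of_mem ha).choose ++ a :: E2.choose := E2.choose_spec
    have h' : t.Perm ((List.append_of_mem ha).choose ++ E2.choose) :=
      (List.perm_cons a).mp ((hsplit ▸ h).trans List.perm_middle)
    consHom a (canon t _ h') ≫ ins a _ _ ≫ eqToHom (congrArg SList.mk hsplit.symm)


lemma split_unique {a : C} : ∀ (p₁ : List C) {q₁ p₂ q₂ : List C},
    (p₁ ++ a :: q₁).Nodup → p₁ ++ a :: q₁ = p₂ ++ a :: q₂ → p₁ = p₂ ∧ q₁ = q₂ := by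
  intro p₁
  induction p₁ with
  | nil =>
    intro q₁ p₂ q₂ nd e
    cases p₂ with
    | nil => simpa using e
    | cons b p₂ =>
      exfalso
      simp only [List.nil_append, List.cons.injEq] at e
      obtain ⟨rfl, rfl⟩ := e
      simp only [List.nil_append, List.nodup_cons] at nd
      exact nd.1 (by simp)
  | cons b p₁ ih =>
    intro q₁ p₂ q₂ nd e
    cases p₂ with
    | nil =>
      exfalso
      simp only [List.cons_append, List.nil_append, List.cons.injEq] at e
      obtain ⟨rfl, e⟩ := e
      simp only [List.cons_append, List.nodup_cons] at nd
      exact nd.1 (by simp)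
    | cons c p₂ =>
      simp only [List.cons_append, List.cons.injEq] at e
      obtain ⟨rfl, e⟩ := e
      simp only [List.cons_append, List.nodup_cons] at nd
      obtain ⟨e1, e2⟩ := ih nd.2 e
      exact ⟨by rw [e1], e2⟩

lemma canon_nil (h : ([] : List C).Perm []) : canon [] [] h = 𝟙 (SList.mk []) := by
  rw [canon]
  exact eqToHom_refl (SList.mk ([] : List C)) _

lemma canon_shape (a : C) (t : List C) {X : SList C} {pre post pre' post' : List C}
    (e1 : pre' = pre) (e2 : post' = post)
    (h1 : t.Perm (pre' ++ post')) (h2 : t.Perm (pre ++ post))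
    (pf1 : SList.mk (pre' ++ a :: post') = X) (pf2 : SList.mk (pre ++ a :: post) = X) :
    consHom a (canon t (pre' ++ post') h1) ≫ ins a pre' post' ≫ eqToHom pf1
      = consHom a (canon t (pre ++ post) h2) ≫ ins a pre post ≫ eqToHom pf2 := by
  subst e1; subst e2; rfl

lemma canon_cons (a : C) (t l' pre post : List C) (E : l' = pre ++ a :: post)
    (nd : l'.Nodup) (h : (a :: t).Perm l') (h' : t.Perm (pre ++ post)) :
    canon (a :: t) l' h
      = consHom a (canon t (pre ++ post) h') ≫ ins a pre post
          ≫ eqToHom (congrArg SList.mk E.symm) := by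
  subst E
  rw [canon]
  have spec := (List.append_of_mem
    (h.subset List.mem_cons_self)).choose_spec.choose_spec
  obtain ⟨e1, e2⟩ := split_unique pre nd spec
  exact canon_shape a t e1.symm e2.symm _ _ _ _

lemma canon_refl : ∀ (l : List C), l.Nodup → ∀ h, canon l l h = 𝟙 (SList.mk l)
  | [], _, h => canon_nil h
  | a :: t, nd, h => by
      rw [canon_cons a t (a :: t) [] t rfl nd h (List.Perm.refl t)]
      simp only [List.nil_append]
      rw [canon_refl t nd.of_cons (List.Perm.refl t)]
      simp [ins, consHom_id]

lemma perm_tail {a : C} {t pre post : List C} (h : (a :: t).Perm (pre ++ a :: post)) :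
    t.Perm (pre ++ post) :=
  (List.perm_cons a).mp (h.trans List.perm_middle)

lemma path_from_nil : ∀ {b : SL C} (p : Quiver.Path (⟨([] : List C)⟩ : SL C) b)
    (h : ([] : List C).Perm b.toList), homOf p = canon [] b.toList h := by
  intro b p
  induction p with
  | nil => intro h; exact homOf_nil.trans (canon_nil h).symm
  | @cons m c q g ih =>
    intro h
    exfalso
    have hq : ([] : List C).Perm m.toList := pathPerm q
    obtain ⟨ml⟩ := m
    have : ml = [] := (List.Perm.eq_nil hq.symm)
    subst this
    exact nomatch g

lemma key {n : ℕ}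
    (IH : ∀ (l : List C), l.Nodup → l.length ≤ n → ∀ (b : SL C)
      (p : Quiver.Path (⟨l⟩ : SL C) b) (h : l.Perm b.toList), homOf p = canon l b.toList h)
    (l : List C) (nd : l.Nodup) (hlen : l.length ≤ n + 1) {m b : SL C} (g : Gen m b)
    (hm : l.Perm m.toList) (hb : l.Perm b.toList) :
    canon l m.toList hm ≫ homOf (Quiver.Hom.toPath g) = canon l b.toList hb := by
  have US : ∀ (t : List C), t.Nodup → t.length ≤ n → ∀ (w : List C)
      (f f' : SList.mk t ⟶ SList.mk w), f = f' := by
    intro t ndt ht w f f'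
    obtain ⟨p, rfl⟩ := (Quotient.functor (Rel (C := C))).map_surjective f
    obtain ⟨p', rfl⟩ := (Quotient.functor (Rel (C := C))).map_surjective f'
    have h1 : t.Perm ((⟨w⟩ : SL C).toList) := pathPerm p
    exact (IH t ndt ht ⟨w⟩ p h1).trans (IH t ndt ht ⟨w⟩ p' h1).symm
  cases g with
  | swap x y s =>
    have hg : homOf (Quiver.Hom.toPath (Gen.swap x y s)) = swapHom x y s := rfl
    rw [hg]
    cases l with
    | nil => exact absurd (List.Perm.eq_nil hm.symm) (by simp)
    | cons a t =>
      have hlt : t.length ≤ n := Nat.succ_le_succ_iff.mp hlen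
      have ndt : t.Nodup := nd.of_cons
      have ndm : (x :: y :: s).Nodup := hm.nodup nd
      have ndb : (y :: x :: s).Nodup := hb.nodup nd
      have hmem : a ∈ x :: y :: s := hm.subset List.mem_cons_self
      by_cases hax : a = x
      · subst hax
        rw [canon_cons a t (a :: y :: s) [] (y :: s) rfl ndm hm (perm_tail hm)]
        rw [canon_cons a t (y :: a :: s) [y] s rfl ndb hb (perm_tail hb)]
        simp only [ins, List.nil_append, List.singleton_append, eqToHom_refl,
          Category.comp_id, Category.id_comp, Category.assoc, consHom_id]
        rfl
      · by_cases hay : a = y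
        · subst hay
          rw [canon_cons a t (x :: a :: s) [x] s rfl ndm hm (perm_tail hm)]
          rw [canon_cons a t (a :: x :: s) [] (x :: s) rfl ndb hb (perm_tail hb)]
          simp only [ins, List.nil_append, List.singleton_append, eqToHom_refl,
            Category.comp_id, Category.id_comp, Category.assoc, consHom_id]
          erw [Category.assoc, swap_swap a x s, Category.comp_id]
        · have has : a ∈ s := by
            simp only [List.mem_cons] at hmem
            tauto
          obtain ⟨p, q, rfl⟩ := List.append_of_mem has
          have c1perm : t.Perm ((x :: y :: p) ++ q) := perm_tail hm
          have c2perm : t.Perm ((y :: x :: p) ++ q) := perm_tail hb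
          rw [canon_cons a t _ (x :: y :: p) q (by simp) ndm hm c1perm]
          rw [canon_cons a t _ (y :: x :: p) q (by simp) ndb hb c2perm]
          simp only [ins, List.cons_append, eqToHom_refl, Category.comp_id,
            Category.assoc, consHom_comp]
          erw [Category.assoc, Category.assoc, Category.assoc, ← swap_nat x y (ins a p q)]
          erw [reassoc_of% (hexagonHom a x y (p ++ q))]
          erw [← reassoc_of% (consHom_comp a)]
          erw [US t ndt hlt (y :: x :: (p ++ q))
            (canon t (x :: y :: (p ++ q)) c1perm ≫ swapHom x y (p ++ q))
            (canon t (y :: x :: (p ++ q)) c2perm)]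
          rfl
  | @cons z m₀ b₀ g₀ =>
    have hcm : consMap z (Quiver.Hom.toPath g₀) = Quiver.Hom.toPath (Gen.cons z g₀) := by
      simp [Quiver.Hom.toPath, consMap]
    have hg : homOf (Quiver.Hom.toPath (Gen.cons z g₀)) = consHom z (homOf (Quiver.Hom.toPath g₀)) := by
      rw [consHom_homOf, hcm]
      rfl
    rw [hg]
    cases l with
    | nil => exact absurd (List.Perm.eq_nil hm.symm) (by simp)
    | cons a t =>
      have hlt : t.length ≤ n := Nat.succ_le_succ_iff.mp hlen
      have ndt : t.Nodup := nd.of_cons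
      have ndm : (z :: m₀).Nodup := hm.nodup nd
      have ndb : (z :: b₀).Nodup := hb.nodup nd
      by_cases haz : a = z
      · subst haz
        rw [canon_cons a t (a :: m₀) [] m₀ rfl ndm hm (perm_tail hm)]
        rw [canon_cons a t (a :: b₀) [] b₀ rfl ndb hb (perm_tail hb)]
        simp only [ins, List.nil_append, eqToHom_refl, Category.comp_id, Category.assoc]
        erw [← consHom_comp a]
        exact congrArg (consHom a) (US t ndt hlt _ _ _)
      · have ham : a ∈ m₀ := by
          have := hm.subset List.mem_cons_self
          simp only [List.mem_cons] at this
          tauto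
        obtain ⟨p, q, rfl⟩ := List.append_of_mem ham
        have hab : a ∈ b₀ := (genPerm g₀).subset (by simp)
        obtain ⟨p', q', rfl⟩ := List.append_of_mem hab
        have c1perm : t.Perm ((z :: p) ++ q) := perm_tail hm
        have c2perm : t.Perm ((z :: p') ++ q') := perm_tail hb
        rw [canon_cons a t _ (z :: p) q (by simp) ndm hm c1perm]
        rw [canon_cons a t _ (z :: p') q' (by simp) ndb hb c2perm]
        simp only [ins, List.cons_append, eqToHom_refl, Category.comp_id,
          Category.assoc, consHom_comp]
        have ndm₀ : (p ++ a :: q).Nodup := (List.nodup_cons.mp ndm).2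
        have ndb₀ : (p' ++ a :: q').Nodup := (List.nodup_cons.mp ndb).2
        have ndJ : (a :: (p ++ q)).Nodup := List.nodup_middle.mp ndm₀
        have lenJ : (a :: (p ++ q)).length ≤ n := by
          have e := c1perm.length_eq
          simp only [List.length_cons, List.length_append, List.cons_append] at e ⊢
          omega
        have hJperm : (a :: (p ++ q)).Perm (p' ++ a :: q') :=
          List.perm_middle.symm.trans (genPerm g₀)
        have hd : (p ++ q).Perm (p' ++ q') := perm_tail hJperm
        have hJ2 : ins a p q ≫ homOf (Quiver.Hom.toPath g₀)
            = consHom a (canon (p ++ q) (p' ++ q') hd) ≫ ins a p' q' := by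
          have e1 : ins a p q ≫ homOf (Quiver.Hom.toPath g₀)
              = canon (a :: (p ++ q)) (p' ++ a :: q') hJperm := US (a :: (p ++ q)) ndJ lenJ _ _ _
          rw [e1, canon_cons a (p ++ q) (p' ++ a :: q') p' q' rfl ndb₀ hJperm hd]
          simp
          rfl
        erw [Category.assoc, Category.assoc, ← consHom_comp z, hJ2]
        simp only [consHom_comp, Category.assoc]
        erw [reassoc_of% (swap_nat a z (canon (p ++ q) (p' ++ q') hd))]
        erw [← reassoc_of% (consHom_comp a)]
        erw [US t ndt hlt (z :: (p' ++ q'))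
          (canon t (z :: (p ++ q)) c1perm ≫ consHom z (canon (p ++ q) (p' ++ q') hd))
          (canon t (z :: (p' ++ q')) c2perm)]
        rfl

lemma coh : ∀ (n : ℕ) (l : List C), l.Nodup → l.length ≤ n →
    ∀ (b : SL C) (p : Quiver.Path (⟨l⟩ : SL C) b) (h : l.Perm b.toList),
      homOf p = canon l b.toList h := by
  intro n
  induction n with
  | zero =>
    intro l nd hlen b p h
    have : l = [] := List.length_eq_zero_iff.mp (Nat.le_zero.mp hlen)
    subst this
    exact path_from_nil p h
  | succ n IHn =>
    intro l nd hlen b p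
    induction p with
    | nil => intro h; exact homOf_nil.trans (canon_refl l nd h).symm
    | @cons m c q g ih =>
      intro h
      have hm : l.Perm m.toList := pathPerm q
      rw [homOf_cons, ih hm]
      exact key IHn l nd hlen g hm h

end SListAux

/-- A symmetric list is *linear* if its underlying list has no duplicates. -/
def SList.Linear {C : Type u} (L : SList C) : Prop := L.toList.Nodup

/-- If `L₁` or `L₂` is a linear symmetric list, then there is at most one
morphism from `L₁` to `L₂` in the category of symmetric lists. -/
theorem SList.subsingleton_hom_of_linear {C : Type u} (L₁ L₂ : SList C)
    (h : L₁.Linear ∨ L₂.Linear) : Subsingleton (L₁ ⟶ L₂) := by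
  constructor
  intro f g
  obtain ⟨⟨l₁⟩⟩ := L₁
  obtain ⟨⟨l₂⟩⟩ := L₂
  obtain ⟨p, rfl⟩ := (CategoryTheory.Quotient.functor (SListDev.Rel (C := C))).map_surjective f
  obtain ⟨q, rfl⟩ := (CategoryTheory.Quotient.functor (SListDev.Rel (C := C))).map_surjective g
  have hperm : l₁.Perm l₂ := SListAux.pathPerm p
  have nd : l₁.Nodup := by
    rcases h with h | h
    · exact h
    · exact hperm.nodup_iff.mpr h
  exact (SListAux.coh l₁.length l₁ nd le_rfl ⟨l₂⟩ p hperm).trans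
    (SListAux.coh l₁.length l₁ nd le_rfl ⟨l₂⟩ q hperm).symm
end
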